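/- For all integers n ≥ 1 and m ≥ 2, the identity (n+1) F_{n,2}(t) = d/dt [ F_{n,1}(t) * F_{n+1,1}(t) ] holds, where * denotes the Hadamard product; more generally, n F_{n-1,m}(t) = d/dt [ F_{n,1}(t) * F_{n-1,m-1}(t) ]. -/

import Mathlib

open Polynomial Finset

/-- The Hadamard (coefficientwise) product of two rational polynomials. -/
noncomputable def hadamard (f g : Polynomial ℚ) : Polynomial ℚ :=
  ∑ i ∈ Finset.range (min f.natDegree g.natDegree + 1),
    Polynomial.C (f.coeff i * g.coeff i) * Polynomial.X ^ i

/-- `F n m (t) = ∑_{k=0}^{n-m+1} C(n,k) C(n,k+1) ⋯ C(n,k+m-1) t^k`. -/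
noncomputable def F (n m : ℕ) : Polynomial ℚ :=
  ∑ k ∈ Finset.range (n - m + 2),
    Polynomial.C (∏ i ∈ Finset.range m, (n.choose (k + i) : ℚ)) * Polynomial.X ^ k

lemma hadamard_coeff (f g : Polynomial ℚ) (j : ℕ) :
    (hadamard f g).coeff j = f.coeff j * g.coeff j := by
  unfold hadamard
  rw [Polynomial.finset_sum_coeff]
  simp only [Polynomial.coeff_C_mul, Polynomial.coeff_X_pow, mul_ite, mul_one, mul_zero]
  rw [Finset.sum_ite_eq (Finset.range _) j]
  by_cases h : j ∈ Finset.range (min f.natDegree g.natDegree + 1)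
  · simp [h]
  · simp only [h, if_false]
    rw [Finset.mem_range, not_lt] at h
    rcases le_total f.natDegree g.natDegree with h' | h'
    · rw [Polynomial.coeff_eq_zero_of_natDegree_lt (by omega : f.natDegree < j), zero_mul]
    · rw [Polynomial.coeff_eq_zero_of_natDegree_lt (by omega : g.natDegree < j), mul_zero]

lemma F_coeff (n m k : ℕ) (hm : 1 ≤ m) :
    (F n m).coeff k = ∏ i ∈ Finset.range m, (n.choose (k + i) : ℚ) := by
  unfold F
  rw [Polynomial.finset_sum_coeff]
  simp only [Polynomial.coeff_C_mul, Polynomial.coeff_X_pow, mul_ite, mul_one, mul_zero]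
  rw [Finset.sum_ite_eq (Finset.range _) k]
  by_cases h : k ∈ Finset.range (n - m + 2)
  · simp [h]
  · simp only [h, if_false]
    rw [Finset.mem_range, not_lt] at h
    have hz : n.choose (k + (m - 1)) = 0 := Nat.choose_eq_zero_of_lt (by omega)
    rw [eq_comm, Finset.prod_eq_zero (i := m - 1) (by simp; omega)]
    exact_mod_cast hz

lemma key1 (n j : ℕ) :
    ((n : ℚ) + 1) * ((n.choose j : ℚ) * (n.choose (j + 1) : ℚ)) =
      (n.choose (j + 1) : ℚ) * ((n + 1).choose (j + 1) : ℚ) * ((j : ℚ) + 1) := by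
  have h := Nat.add_one_mul_choose_eq n j
  have h' : ((n : ℚ) + 1) * n.choose j = (n + 1).choose (j + 1) * (j + 1) := by exact_mod_cast h
  linear_combination (n.choose (j + 1) : ℚ) * h'

lemma key2 (n j : ℕ) (hn : 1 ≤ n) (P : ℚ) :
    (n : ℚ) * (P * ((n - 1).choose j : ℚ)) = (n.choose (j + 1) : ℚ) * P * ((j : ℚ) + 1) := by
  have h := Nat.add_one_mul_choose_eq (n - 1) j
  rw [(by omega : n - 1 + 1 = n)] at h
  have h' : (n : ℚ) * (n - 1).choose j = n.choose (j + 1) * (j + 1) := by exact_mod_cast h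
  linear_combination P * h'

theorem F_derivative_hadamard (n m : ℕ) (hn : 1 ≤ n) (hm : 2 ≤ m) :
    Polynomial.C ((n : ℚ) + 1) * F n 2 =
        Polynomial.derivative (hadamard (F n 1) (F (n + 1) 1)) ∧
      Polynomial.C (n : ℚ) * F (n - 1) m =
        Polynomial.derivative (hadamard (F n 1) (F (n - 1) (m - 1))) := by
  constructor
  · ext j
    rw [Polynomial.coeff_C_mul, Polynomial.coeff_derivative, hadamard_coeff,
      F_coeff n 2 j (by omega), F_coeff n 1 (j + 1) (by omega),
      F_coeff (n + 1) 1 (j + 1) (by omega)]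
    simp only [Finset.prod_range_succ, Finset.prod_range_one, Finset.prod_range_zero, one_mul]
    exact key1 n j
  · ext j
    rw [Polynomial.coeff_C_mul, Polynomial.coeff_derivative, hadamard_coeff,
      F_coeff (n - 1) m j (by omega), F_coeff n 1 (j + 1) (by omega),
      F_coeff (n - 1) (m - 1) (j + 1) (by omega)]
    have hsplit : ∏ i ∈ Finset.range m, ((n - 1).choose (j + i) : ℚ)
        = (∏ i ∈ Finset.range (m - 1), ((n - 1).choose (j + (i + 1)) : ℚ))
          * (n - 1).choose (j + 0) := by
      conv_lhs => rw [show m = m - 1 + 1 from by omega, Finset.prod_range_succ']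
    rw [hsplit]
    simp only [Finset.prod_range_one, Finset.prod_range_zero, one_mul, add_zero]
    have hprod : ∏ i ∈ Finset.range (m - 1), ((n - 1).choose (j + (i + 1)) : ℚ)
        = ∏ i ∈ Finset.range (m - 1), ((n - 1).choose (j + 1 + i) : ℚ) := by
      apply Finset.prod_congr rfl
      intro i _
      congr 2
      omega
    rw [hprod]
    exact key2 n j hn _
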